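/- (General fusion theorem) Let Π_1, ..., Π_k be independent Uniform(0,1) random variables, γ_c : [0,1]^k → ℝ continuous, and F the CDF of γ_c(U_1,...,U_k) for independent Uniform(0,1) variables U_1,...,U_k. Then the random variable Z = F(γ_c(Π_1,...,Π_k)) satisfies P(Z ≤ α) ≤ α for all α ∈ [0,1], and any random variable Ż with Ż ≥ Z pointwise also satisfies P(Ż ≤ α) ≤ α for all α ∈ [0,1]. -/

import Mathlib

open MeasureTheory ProbabilityTheory

lemma pit_superuniform {X : Type*} [MeasurableSpace X] (π : Measure X) [IsProbabilityMeasure π]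
    (g : X → ℝ) (F : ℝ → ℝ)
    (hF : ∀ t, F t = (π {x | g x ≤ t}).toReal) (a : ℝ) :
    π {x | F (g x) ≤ a} ≤ ENNReal.ofReal a := by
  have hmF : Monotone F := by
    intro s t hst
    rw [hF, hF]
    exact ENNReal.toReal_mono (measure_ne_top _ _)
      (measure_mono fun x hx => le_trans hx hst)
  have hofF : ∀ t, π {x | g x ≤ t} = ENNReal.ofReal (F t) := fun t => by
    rw [hF, ENNReal.ofReal_toReal (measure_ne_top _ _)]
  set A : Set ℝ := {t | F t ≤ a} with hA_def
  have hdc : ∀ {s t : ℝ}, t ∈ A → s ≤ t → s ∈ A := fun ht hst => le_trans (hmF hst) ht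
  have hset : {x | F (g x) ≤ a} = g ⁻¹' A := rfl
  by_cases hA : A.Nonempty
  · by_cases hb : BddAbove A
    · obtain ⟨s, hs_def⟩ : ∃ s, s = sSup A := ⟨sSup A, rfl⟩
      by_cases hs : s ∈ A
      · have heq : g ⁻¹' A = {x | g x ≤ s} := by
          ext x
          exact ⟨fun hx => hs_def ▸ le_csSup hb hx, fun hx => hdc hs hx⟩
        rw [hset, heq, hofF]
        exact ENNReal.ofReal_le_ofReal hs
      · have hAeq : A = Set.Iio s := by
          subst hs_def
          ext t
          constructor
          · intro ht
            exact lt_of_le_of_ne (le_csSup hb ht) (fun h => hs (h ▸ ht))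
          · intro ht
            obtain ⟨t', ht', htt'⟩ := exists_lt_of_lt_csSup hA ht
            exact hdc ht' htt'.le
        have heq : g ⁻¹' A = ⋃ n : ℕ, {x | g x ≤ s - 1 / (n + 1)} := by
          ext x
          simp only [Set.mem_preimage, hAeq, Set.mem_Iio, Set.mem_iUnion, Set.mem_setOf_eq]
          constructor
          · intro hx
            obtain ⟨n, hn⟩ := exists_nat_one_div_lt (sub_pos.2 hx)
            exact ⟨n, by linarith⟩
          · rintro ⟨n, hn⟩
            have : (0:ℝ) < 1 / (n + 1) := by positivity
            linarith
        rw [hset, heq]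
        have hmono : Monotone (fun n : ℕ => {x | g x ≤ s - 1 / (n + 1)}) := by
          intro m n hmn x hx
          simp only [Set.mem_setOf_eq] at hx ⊢
          have h1 : (1:ℝ) / (n + 1) ≤ 1 / (m + 1) := by
            apply one_div_le_one_div_of_le (by positivity)
            exact_mod_cast add_le_add_left (Nat.cast_le.2 hmn) 1
          linarith
        rw [hmono.directed_le.measure_iUnion]
        apply iSup_le
        intro n
        rw [hofF]
        apply ENNReal.ofReal_le_ofReal
        have hmem : s - 1 / (n + 1 : ℝ) ∈ A := by
          rw [hAeq, Set.mem_Iio]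
          have : (0:ℝ) < 1 / (n + 1) := by positivity
          linarith
        exact hmem
    · have hAuniv : A = Set.univ := by
        ext t
        simp only [Set.mem_univ, iff_true]
        obtain ⟨t', ht', htt'⟩ := not_bddAbove_iff.1 hb t
        exact hdc ht' htt'.le
      have heq : g ⁻¹' A = ⋃ n : ℕ, {x | g x ≤ n} := by
        ext x
        simp only [Set.mem_preimage, hAuniv, Set.mem_univ, true_iff, Set.mem_iUnion,
          Set.mem_setOf_eq]
        obtain ⟨n, hn⟩ := exists_nat_ge (g x)
        exact ⟨n, hn⟩
      rw [hset, heq]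
      have hmono : Monotone (fun n : ℕ => {x | g x ≤ (n : ℝ)}) := by
        intro m n hmn x hx
        simp only [Set.mem_setOf_eq] at hx ⊢
        exact le_trans hx (Nat.cast_le.2 hmn)
      rw [hmono.directed_le.measure_iUnion]
      apply iSup_le
      intro n
      rw [hofF]
      apply ENNReal.ofReal_le_ofReal
      have : (n : ℝ) ∈ A := hAuniv ▸ Set.mem_univ _
      exact this
  · have : g ⁻¹' A = ∅ := by
      rw [Set.not_nonempty_iff_eq_empty.1 hA, Set.preimage_empty]
    rw [hset, this]
    simp

theorem general_fusion_validity
    {Ω : Type*} [MeasurableSpace Ω] (μ : Measure Ω) [IsProbabilityMeasure μ]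
    (k : ℕ) (P : Fin k → Ω → ℝ)
    (hmeas : ∀ i, Measurable (P i))
    (hindep : iIndepFun P μ)
    (hunif : ∀ i, ∀ t ∈ Set.Icc (0:ℝ) 1, μ {ω | P i ω ≤ t} = ENNReal.ofReal t)
    (γ : (Fin k → ℝ) → ℝ) (hγ : Continuous γ)
    (F : ℝ → ℝ)
    (hF : ∀ t, F t =
      ((Measure.pi fun _ : Fin k => volume.restrict (Set.Icc (0:ℝ) 1))
        {x | γ x ≤ t}).toReal)
    (Zdot : Ω → ℝ)
    (hdom : ∀ ω, F (γ fun i => P i ω) ≤ Zdot ω) :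
    (∀ α ∈ Set.Icc (0:ℝ) 1,
        μ {ω | F (γ fun i => P i ω) ≤ α} ≤ ENNReal.ofReal α) ∧
    (∀ α ∈ Set.Icc (0:ℝ) 1, μ {ω | Zdot ω ≤ α} ≤ ENNReal.ofReal α) := by
  haveI hprob : IsProbabilityMeasure ((volume : Measure ℝ).restrict (Set.Icc (0:ℝ) 1)) := by
    constructor
    rw [Measure.restrict_apply_univ, Real.volume_Icc]
    norm_num
  set π : Measure (Fin k → ℝ) :=
    Measure.pi fun _ : Fin k => (volume : Measure ℝ).restrict (Set.Icc (0:ℝ) 1) with hπ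
  haveI : IsProbabilityMeasure π := by rw [hπ]; infer_instance
  -- marginal laws
  have hmap : ∀ i, Measure.map (P i) μ = (volume : Measure ℝ).restrict (Set.Icc (0:ℝ) 1) := by
    intro i
    haveI : IsProbabilityMeasure (Measure.map (P i) μ) :=
      Measure.isProbabilityMeasure_map (hmeas i).aemeasurable
    apply Measure.ext_of_Iic
    intro t
    rw [Measure.map_apply (hmeas i) measurableSet_Iic,
      Measure.restrict_apply measurableSet_Iic]
    have hpre : P i ⁻¹' Set.Iic t = {ω | P i ω ≤ t} := rfl
    rw [hpre]
    rcases lt_or_ge t 0 with ht0 | ht0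
    · have h1 : μ {ω | P i ω ≤ t} = 0 := by
        have hle : μ {ω | P i ω ≤ t} ≤ μ {ω | P i ω ≤ 0} :=
          measure_mono fun ω hω => le_trans hω ht0.le
        rw [hunif i 0 (by simp)] at hle
        simpa using hle
      have h2 : Set.Iic t ∩ Set.Icc (0:ℝ) 1 = ∅ := by
        rw [Set.eq_empty_iff_forall_notMem]
        rintro x ⟨hx, hx0, _⟩
        rw [Set.mem_Iic] at hx
        linarith
      rw [h1, h2, measure_empty]
    · rcases le_or_gt t 1 with ht1 | ht1
      · rw [hunif i t ⟨ht0, ht1⟩]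
        have h2 : Set.Iic t ∩ Set.Icc (0:ℝ) 1 = Set.Icc 0 t := by
          ext x
          simp only [Set.mem_inter_iff, Set.mem_Iic, Set.mem_Icc]
          constructor
          · rintro ⟨h1, h2, _⟩; exact ⟨h2, h1⟩
          · rintro ⟨h1, h2⟩; exact ⟨h2, h1, le_trans h2 ht1⟩
        rw [h2, Real.volume_Icc, sub_zero]
      · have h1 : μ {ω | P i ω ≤ t} = 1 := by
          have hge : μ {ω | P i ω ≤ 1} ≤ μ {ω | P i ω ≤ t} :=
            measure_mono fun ω hω => le_trans hω ht1.le
          rw [hunif i 1 (by simp)] at hge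
          refine le_antisymm prob_le_one ?_
          simpa using hge
        have h2 : Set.Iic t ∩ Set.Icc (0:ℝ) 1 = Set.Icc 0 1 := by
          ext x
          simp only [Set.mem_inter_iff, Set.mem_Iic, Set.mem_Icc]
          constructor
          · rintro ⟨_, h⟩; exact h
          · rintro ⟨h2, h3⟩; exact ⟨le_trans h3 ht1.le, h2, h3⟩
        rw [h1, h2, Real.volume_Icc]
        norm_num
  -- joint law
  have hΦ : Measurable (fun ω => (fun i => P i ω) : Ω → Fin k → ℝ) :=
    measurable_pi_lambda _ hmeas
  have hjoint : Measure.map (fun ω => (fun i => P i ω)) μ = π := by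
    rw [hπ]
    refine (Measure.pi_eq fun s hs => ?_).symm
    rw [Measure.map_apply hΦ (MeasurableSet.univ_pi hs)]
    have hpre : (fun ω => (fun i => P i ω)) ⁻¹' Set.pi Set.univ s
        = ⋂ i ∈ Finset.univ, P i ⁻¹' s i := by
      ext ω
      simp [Set.mem_pi]
    rw [hpre, hindep.measure_inter_preimage_eq_mul Finset.univ (fun i _ => hs i)]
    refine Finset.prod_congr rfl fun i _ => ?_
    rw [← hmap i, Measure.map_apply (hmeas i) (hs i)]
  -- measurability of the target set
  have hmF : Monotone F := by
    intro s t hst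
    rw [hF, hF]
    exact ENNReal.toReal_mono (measure_ne_top _ _)
      (measure_mono fun x hx => le_trans hx hst)
  have hFmeas : Measurable F := hmF.measurable
  have key : ∀ α ∈ Set.Icc (0:ℝ) 1,
      μ {ω | F (γ fun i => P i ω) ≤ α} ≤ ENNReal.ofReal α := by
    intro α hα
    have hSmeas : MeasurableSet {x : Fin k → ℝ | F (γ x) ≤ α} :=
      (hFmeas.comp hγ.measurable) measurableSet_Iic
    have : μ {ω | F (γ fun i => P i ω) ≤ α}
        = Measure.map (fun ω => (fun i => P i ω)) μ {x | F (γ x) ≤ α} := by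
      rw [Measure.map_apply hΦ hSmeas]
      rfl
    rw [this, hjoint]
    exact pit_superuniform π γ F (fun t => hF t) α
  refine ⟨key, fun α hα => ?_⟩
  calc μ {ω | Zdot ω ≤ α} ≤ μ {ω | F (γ fun i => P i ω) ≤ α} :=
        measure_mono fun ω hω => le_trans (hdom ω) hω
    _ ≤ ENNReal.ofReal α := key α hα
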